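/- Let X be a finite subset of α with n = |X| ≥ 1, let x⁻ ∈ X, and set X' = X \ {x⁻}. Then for every y ∈ X': if y ∈ L(X) and y ∈ R(X'), then y is the maximum element of L(X) (i.e., y = x_(I(n)−1)); and if y ∈ R(X) and y ∈ L(X'), then y is the minimum element of R(X) (i.e., y = x_(I(n))). -/

import Mathlib

open Finset

/-- Median index `I(n) = ⌈n/2⌉`. -/
def medianIdx (n : ℕ) : ℕ := (n + 1) / 2

/-- 1-indexed rank of `x` in `X`: the number of elements of `X` that are `≤ x`.
For `x ∈ X`, `rank X x = i` means `x` is the `i`-th smallest element of `X`. -/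
def rank {α : Type*} [LinearOrder α] (X : Finset α) (x : α) : ℕ :=
  (X.filter (fun y => y ≤ x)).card

/-- Left part of the median partition: elements of rank `< I(|X|)`. -/
def medL {α : Type*} [LinearOrder α] (X : Finset α) : Finset α :=
  X.filter (fun x => rank X x < medianIdx X.card)

/-- Right part of the median partition: elements of rank `≥ I(|X|)`. -/
def medR {α : Type*} [LinearOrder α] (X : Finset α) : Finset α :=
  X.filter (fun x => medianIdx X.card ≤ rank X x)

lemma rank_lt_rank {α : Type*} [LinearOrder α] {X : Finset α} {y z : α}
    (hz : z ∈ X) (h : y < z) : rank X y < rank X z := by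
  apply card_lt_card
  constructor
  · intro a ha
    simp only [mem_filter] at ha ⊢
    exact ⟨ha.1, ha.2.trans h.le⟩
  · intro hs
    have := hs (mem_filter.mpr ⟨hz, le_rfl⟩)
    exact absurd (mem_filter.mp this).2 h.not_ge

theorem median_partition_boundary_delete {α : Type*} [LinearOrder α]
    (X : Finset α) (hn : 1 ≤ X.card)
    (xm : α) (hxm : xm ∈ X)
    (X' : Finset α) (hX' : X' = X \ {xm}) :
    ∀ y ∈ X',
      (y ∈ medL X → y ∈ medR X' →
        (∀ z ∈ medL X, z ≤ y) ∧ rank X y = medianIdx X.card - 1) ∧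
      (y ∈ medR X → y ∈ medL X' →
        (∀ z ∈ medR X, y ≤ z) ∧ rank X y = medianIdx X.card) := by
  subst hX'
  have hsub : {xm} ⊆ X := singleton_subset_iff.mpr hxm
  have hcard : (X \ {xm}).card = X.card - 1 := by
    rw [card_sdiff_of_subset hsub, card_singleton]
  intro y hy
  have hyX : y ∈ X := (mem_sdiff.mp hy).1
  have hyne : y ≠ xm := by simpa using (mem_sdiff.mp hy).2
  have hle : rank (X \ {xm}) y ≤ rank X y := by
    apply card_le_card
    intro a ha
    simp only [mem_filter, mem_sdiff] at ha ⊢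
    tauto
  have hcase : rank X y = rank (X \ {xm}) y ∨ rank X y = rank (X \ {xm}) y + 1 := by
    by_cases h : xm ≤ y
    · right
      have heq : X.filter (fun z => z ≤ y) =
          insert xm ((X \ {xm}).filter (fun z => z ≤ y)) := by
        ext a
        simp only [mem_insert, mem_filter, mem_sdiff, mem_singleton]
        constructor
        · rintro ⟨haX, hay⟩
          by_cases hax : a = xm
          · exact Or.inl hax
          · exact Or.inr ⟨⟨haX, hax⟩, hay⟩
        · rintro (rfl | ⟨⟨haX, _⟩, hay⟩)
          exacts [⟨hxm, h⟩, ⟨haX, hay⟩]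
      simp only [rank]
      rw [heq, card_insert_of_notMem (by simp [mem_filter, mem_sdiff])]
    · left
      simp only [rank]
      congr 1
      ext a
      simp only [mem_filter, mem_sdiff, mem_singleton]
      constructor
      · rintro ⟨haX, hay⟩
        refine ⟨⟨haX, ?_⟩, hay⟩
        rintro rfl
        exact h hay
      · tauto
  have hy1 : 1 ≤ rank X y :=
    card_pos.mpr ⟨y, mem_filter.mpr ⟨hyX, le_rfl⟩⟩
  constructor
  · intro hL hR
    rw [medL, mem_filter] at hL
    rw [medR, mem_filter] at hR
    simp only [medL, medR, mem_filter, hcard, medianIdx] at hL hR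
    have hr : rank X y = medianIdx X.card - 1 := by
      simp only [medianIdx]
      omega
    refine ⟨?_, hr⟩
    intro z hz
    simp only [medL, mem_filter] at hz
    by_contra hzy
    push_neg at hzy
    have := rank_lt_rank hz.1 hzy
    simp only [medianIdx] at hr hz
    omega
  · intro hR hL
    rw [medL, mem_filter] at hL
    rw [medR, mem_filter] at hR
    simp only [medL, medR, mem_filter, hcard, medianIdx] at hL hR
    have hr : rank X y = medianIdx X.card := by
      simp only [medianIdx]
      omega
    refine ⟨?_, hr⟩
    intro z hz
    simp only [medR, mem_filter] at hz
    by_contra hyz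
    push_neg at hyz
    have := rank_lt_rank hyX hyz
    simp only [medianIdx] at hr hz
    omega
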